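/- Let ψ₊, ψ₋ ∈ (0,π), S := ψ₊ + ψ₋, and let c ∈ ℝ satisfy c·sin θ + S > 0 for all θ ∈ [−ψ₊, ψ₋] and ∫_{−ψ₊}^{ψ₋} sin θ / (c·sin θ + S) dθ = 0. Define κ*(θ) := −(c·sin θ + S). Then the signed area A(κ*) := (1/2)·( −∫_{−ψ₊}^{ψ₋} (sin θ / κ*(θ)) · (∫_θ^{ψ₋} cos θ̃ / κ*(θ̃) dθ̃) dθ + ∫_{−ψ₊}^{ψ₋} (cos θ / κ*(θ)) · (∫_θ^{ψ₋} sin θ̃ / κ*(θ̃) dθ̃) dθ ) is strictly positive. -/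

import Mathlib

noncomputable section

open Real Set intervalIntegral

/-- The signed area enclosed by a concave curve with curvature `κ` (in the
tangent-angle parametrization on `[−ψ₊,ψ₋]`) and the `x`-axis. -/
def signedArea (ψp ψm : ℝ) (κ : ℝ → ℝ) : ℝ :=
  (1/2) * (-(∫ θ in (-ψp)..ψm, (Real.sin θ / κ θ)
        * ∫ θ' in θ..ψm, Real.cos θ' / κ θ')
    + ∫ θ in (-ψp)..ψm, (Real.cos θ / κ θ)
        * ∫ θ' in θ..ψm, Real.sin θ' / κ θ')

/-- **Positivity of the signed area of the traveling wave profile**: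
if `κ*(θ) = −(c sin θ + S)` is negative on `[−ψ₊,ψ₋]` and
`∫ sin θ/κ* dθ = 0`, then the signed area `A(κ*)` is strictly positive. -/
theorem traveling_wave_area_positive
    (ψp ψm c : ℝ) (hψp : ψp ∈ Set.Ioo 0 π) (hψm : ψm ∈ Set.Ioo 0 π)
    (hpos : ∀ θ ∈ Set.Icc (-ψp) ψm, 0 < c * Real.sin θ + (ψp + ψm))
    (hbc : (∫ θ in (-ψp)..ψm,
        Real.sin θ / (-(c * Real.sin θ + (ψp + ψm)))) = 0) :
    0 < signedArea ψp ψm (fun θ => -(c * Real.sin θ + (ψp + ψm))) := by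
  obtain ⟨hψp0, hψpπ⟩ := hψp
  obtain ⟨hψm0, hψmπ⟩ := hψm
  set S := ψp + ψm with hSdef
  have hS0 : 0 < S := add_pos hψp0 hψm0
  have hab : (-ψp) ≤ ψm := by linarith
  have hIccU : Set.uIcc (-ψp) ψm = Set.Icc (-ψp) ψm := Set.uIcc_of_le hab
  have hX : Continuous (fun θ => c * Real.sin θ + S) :=
    (continuous_const.mul Real.continuous_sin).add continuous_const
  have hne : ∀ θ ∈ Set.Icc (-ψp) ψm, c * Real.sin θ + S ≠ 0 := fun θ hθ => (hpos θ hθ).ne'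
  have hcl : Continuous (fun v : ℝ => c * v + S) :=
    (continuous_const.mul continuous_id).add continuous_const
  -- positivity of the linear function on the segment from 0 to sin θ
  have hlin : ∀ θ ∈ Set.Icc (-ψp) ψm, ∀ v ∈ Set.uIcc (0:ℝ) (Real.sin θ), 0 < c * v + S := by
    intro θ hθ v hv
    have h1 := hpos θ hθ
    rcases Set.mem_uIcc.mp hv with ⟨h2, h3⟩ | ⟨h2, h3⟩ <;>
      rcases le_total 0 c with hc | hc <;> nlinarith
  set L : ℝ → ℝ := fun θ => ∫ v in (0:ℝ)..(Real.sin θ), (c * v + S)⁻¹ with hLdef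
  have hLderiv : ∀ θ ∈ Set.Icc (-ψp) ψm,
      HasDerivAt L (Real.cos θ / (c * Real.sin θ + S)) θ := by
    intro θ hθ
    have hint : IntervalIntegrable (fun v => (c * v + S)⁻¹)
        MeasureTheory.volume 0 (Real.sin θ) := by
      apply ContinuousOn.intervalIntegrable
      exact ContinuousOn.inv₀ hcl.continuousOn (fun v hv => (hlin θ hθ v hv).ne')
    have hct : ContinuousAt (fun v : ℝ => (c * v + S)⁻¹) (Real.sin θ) :=
      hcl.continuousAt.inv₀ (hne θ hθ)
    have hsm : StronglyMeasurableAtFilter (fun v : ℝ => (c * v + S)⁻¹)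
        (nhds (Real.sin θ)) MeasureTheory.volume :=
      hcl.measurable.inv.stronglyMeasurable.stronglyMeasurableAtFilter
    have h1 := intervalIntegral.integral_hasDerivAt_right hint hsm hct
    have h2 := h1.comp θ (Real.hasDerivAt_sin θ)
    have he : Real.cos θ / (c * Real.sin θ + S) = (c * Real.sin θ + S)⁻¹ * Real.cos θ := by
      rw [div_eq_inv_mul]
    rw [he]
    exact h2
  have hLcont : ContinuousOn L (Set.Icc (-ψp) ψm) :=
    fun θ hθ => ((hLderiv θ hθ).continuousAt).continuousWithinAt
  have hsub : ∀ θ ∈ Set.Icc (-ψp) ψm, Set.uIcc θ ψm ⊆ Set.Icc (-ψp) ψm := by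
    intro θ hθ
    rw [Set.uIcc_of_le hθ.2]
    exact Set.Icc_subset_Icc hθ.1 le_rfl
  have hcont_sh : ContinuousOn (fun θ => Real.sin θ / (c * Real.sin θ + S))
      (Set.Icc (-ψp) ψm) := Real.continuous_sin.continuousOn.div hX.continuousOn hne
  have hcont_ch : ContinuousOn (fun θ => Real.cos θ / (c * Real.sin θ + S))
      (Set.Icc (-ψp) ψm) := Real.continuous_cos.continuousOn.div hX.continuousOn hne
  have hint_sh : ∀ a b : ℝ, Set.uIcc a b ⊆ Set.Icc (-ψp) ψm →
      IntervalIntegrable (fun θ => Real.sin θ / (c * Real.sin θ + S))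
        MeasureTheory.volume a b :=
    fun a b hs => (hcont_sh.mono hs).intervalIntegrable
  have hint_ch : ∀ a b : ℝ, Set.uIcc a b ⊆ Set.Icc (-ψp) ψm →
      IntervalIntegrable (fun θ => Real.cos θ / (c * Real.sin θ + S))
        MeasureTheory.volume a b :=
    fun a b hs => (hcont_ch.mono hs).intervalIntegrable
  have hbc0 : (∫ θ in (-ψp)..ψm, Real.sin θ / (c * Real.sin θ + S)) = 0 := by
    have h := hbc
    simp only [div_neg] at h
    rwa [intervalIntegral.integral_neg, neg_eq_zero] at h
  have hFTC : ∀ θ ∈ Set.Icc (-ψp) ψm,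
      (∫ t in θ..ψm, Real.cos t / (c * Real.sin t + S)) = L ψm - L θ := by
    intro θ hθ
    exact intervalIntegral.integral_eq_sub_of_hasDerivAt
      (fun t ht => hLderiv t (hsub θ hθ ht)) (hint_ch θ ψm (hsub θ hθ))
  have hVderiv : ∀ θ ∈ Set.Icc (-ψp) ψm,
      HasDerivAt (fun x => ∫ t in x..ψm, Real.sin t / (c * Real.sin t + S))
        (-(Real.sin θ / (c * Real.sin θ + S))) θ := by
    intro θ hθ
    exact intervalIntegral.integral_hasDerivAt_left (hint_sh θ ψm (hsub θ hθ))
      ((Real.measurable_sin.div hX.measurable).stronglyMeasurable.stronglyMeasurableAtFilter)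
      (Real.continuous_sin.continuousAt.div hX.continuousAt (hne θ hθ))
  set I : ℝ := ∫ θ in (-ψp)..ψm, Real.sin θ / (c * Real.sin θ + S) * L θ with hIdef
  have hintL : IntervalIntegrable (fun θ => Real.sin θ / (c * Real.sin θ + S) * L θ)
      MeasureTheory.volume (-ψp) ψm := by
    apply ContinuousOn.intervalIntegrable
    rw [hIccU]
    exact hcont_sh.mul hLcont
  -- the first term
  have hT1 : (∫ θ in (-ψp)..ψm, Real.sin θ / (c * Real.sin θ + S)
        * ∫ t in θ..ψm, Real.cos t / (c * Real.sin t + S)) = -I := by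
    have e1 : (∫ θ in (-ψp)..ψm, Real.sin θ / (c * Real.sin θ + S)
          * ∫ t in θ..ψm, Real.cos t / (c * Real.sin t + S))
        = ∫ θ in (-ψp)..ψm, (Real.sin θ / (c * Real.sin θ + S) * L ψm
            - Real.sin θ / (c * Real.sin θ + S) * L θ) := by
      apply intervalIntegral.integral_congr
      intro θ hθ
      rw [hIccU] at hθ
      simp only
      rw [hFTC θ hθ]; ring
    rw [e1, intervalIntegral.integral_sub ((hint_sh (-ψp) ψm (by rw [hIccU])).mul_const _)
        hintL, intervalIntegral.integral_mul_const, hbc0, ← hIdef]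
    ring
  -- the second term, by integration by parts
  have hT2 : (∫ θ in (-ψp)..ψm, Real.cos θ / (c * Real.sin θ + S)
        * ∫ t in θ..ψm, Real.sin t / (c * Real.sin t + S)) = I := by
    have hIBP := intervalIntegral.integral_mul_deriv_eq_deriv_mul
      (u := L) (v := fun x => ∫ t in x..ψm, Real.sin t / (c * Real.sin t + S))
      (u' := fun θ => Real.cos θ / (c * Real.sin θ + S))
      (v' := fun θ => -(Real.sin θ / (c * Real.sin θ + S)))
      (a := -ψp) (b := ψm)
      (fun x hx => hLderiv x (by rwa [hIccU] at hx))
      (fun x hx => hVderiv x (by rwa [hIccU] at hx))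
      (hint_ch (-ψp) ψm (by rw [hIccU]))
      ((hint_sh (-ψp) ψm (by rw [hIccU])).neg)
    rw [intervalIntegral.integral_same, hbc0, mul_zero, mul_zero, sub_zero, zero_sub] at hIBP
    have hthis : (∫ θ in (-ψp)..ψm, L θ * -(Real.sin θ / (c * Real.sin θ + S)))
        = -I := by
      rw [hIdef, ← intervalIntegral.integral_neg]
      exact intervalIntegral.integral_congr (fun θ hθ => by ring)
    rw [hthis] at hIBP
    linarith
  -- positivity of I
  have hL_pos : ∀ θ ∈ Set.Ioo (0:ℝ) ψm, 0 < L θ := by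
    intro θ hθ
    obtain ⟨h1, h2⟩ := hθ
    have hθIcc : θ ∈ Set.Icc (-ψp) ψm := ⟨by linarith, h2.le⟩
    have hs : 0 < Real.sin θ := Real.sin_pos_of_pos_of_lt_pi h1 (lt_trans h2 hψmπ)
    apply intervalIntegral.intervalIntegral_pos_of_pos_on
    · exact ContinuousOn.intervalIntegrable
        (ContinuousOn.inv₀ hcl.continuousOn (fun v hv => (hlin θ hθIcc v hv).ne'))
    · intro v hv
      refine inv_pos.mpr (hlin θ hθIcc v ?_)
      rw [Set.uIcc_of_le hs.le]
      exact Set.Ioo_subset_Icc_self hv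
    · exact hs
  have hL_neg : ∀ θ ∈ Set.Ioo (-ψp) (0:ℝ), L θ < 0 := by
    intro θ hθ
    obtain ⟨h1, h2⟩ := hθ
    have hθIcc : θ ∈ Set.Icc (-ψp) ψm := ⟨h1.le, by linarith⟩
    have hs : Real.sin θ < 0 := Real.sin_neg_of_neg_of_neg_pi_lt h2 (by linarith)
    have hmemsub : Set.uIcc (Real.sin θ) (0:ℝ) ⊆ Set.uIcc (0:ℝ) (Real.sin θ) := by
      rw [Set.uIcc_comm]
    have hp : (0:ℝ) < ∫ v in (Real.sin θ)..(0:ℝ), (c * v + S)⁻¹ := by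
      apply intervalIntegral.intervalIntegral_pos_of_pos_on
      · exact ContinuousOn.intervalIntegrable
          (ContinuousOn.inv₀ (hcl.continuousOn.mono hmemsub)
            (fun v hv => (hlin θ hθIcc v (hmemsub hv)).ne'))
      · intro v hv
        refine inv_pos.mpr (hlin θ hθIcc v ?_)
        rw [Set.uIcc_comm, Set.uIcc_of_le hs.le]
        exact Set.Ioo_subset_Icc_self hv
      · exact hs
    have hsymm : L θ = -(∫ v in (Real.sin θ)..(0:ℝ), (c * v + S)⁻¹) := by
      rw [hLdef]
      exact intervalIntegral.integral_symm _ _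
    rw [hsymm]
    linarith
  have hintI1 : IntervalIntegrable (fun θ => Real.sin θ / (c * Real.sin θ + S) * L θ)
      MeasureTheory.volume (-ψp) 0 := by
    apply ContinuousOn.intervalIntegrable
    refine (hcont_sh.mul hLcont).mono ?_
    rw [Set.uIcc_of_le (by linarith : (-ψp) ≤ (0:ℝ))]
    exact Set.Icc_subset_Icc le_rfl (by linarith)
  have hintI2 : IntervalIntegrable (fun θ => Real.sin θ / (c * Real.sin θ + S) * L θ)
      MeasureTheory.volume 0 ψm := by
    apply ContinuousOn.intervalIntegrable
    refine (hcont_sh.mul hLcont).mono ?_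
    rw [Set.uIcc_of_le hψm0.le]
    exact Set.Icc_subset_Icc (by linarith) le_rfl
  have p1 : 0 < ∫ θ in (-ψp)..(0:ℝ), Real.sin θ / (c * Real.sin θ + S) * L θ := by
    apply intervalIntegral.intervalIntegral_pos_of_pos_on hintI1 _ (by linarith)
    intro θ hθ
    obtain ⟨h1, h2⟩ := hθ
    have hθIcc : θ ∈ Set.Icc (-ψp) ψm := ⟨h1.le, by linarith⟩
    have hs : Real.sin θ < 0 := Real.sin_neg_of_neg_of_neg_pi_lt h2 (by linarith)
    exact mul_pos_of_neg_of_neg (div_neg_of_neg_of_pos hs (hpos θ hθIcc))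
      (hL_neg θ ⟨h1, h2⟩)
  have p2 : 0 < ∫ θ in (0:ℝ)..ψm, Real.sin θ / (c * Real.sin θ + S) * L θ := by
    apply intervalIntegral.intervalIntegral_pos_of_pos_on hintI2 _ hψm0
    intro θ hθ
    obtain ⟨h1, h2⟩ := hθ
    have hθIcc : θ ∈ Set.Icc (-ψp) ψm := ⟨by linarith, h2.le⟩
    have hs : 0 < Real.sin θ := Real.sin_pos_of_pos_of_lt_pi h1 (lt_trans h2 hψmπ)
    exact mul_pos (div_pos hs (hpos θ hθIcc)) (hL_pos θ ⟨h1, h2⟩)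
  have hI : 0 < I := by
    have hsplit := intervalIntegral.integral_add_adjacent_intervals hintI1 hintI2
    rw [hIdef, ← hsplit]
    linarith
  unfold signedArea
  simp only [div_neg, intervalIntegral.integral_neg, mul_neg, neg_mul, neg_neg]
  rw [hT1, hT2, neg_neg]
  linarith
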